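/- Let q ∈ K. For all plane posets P, Q, R: ⟨P ▷ Q, R⟩_q = Σ over decompositions R = R₁R₂ (as a composition of plane subposets) of q^{|R₁|·|R₂|} ⟨P, R₁⟩_q ⟨Q, R₂⟩_q. Equivalently, with the coproduct Δ'_q defined by Δ'_q(R) = Σ_{R₁R₂ = R} q^{|R₁||R₂|} R₁ ⊗ R₂, one has ⟨x ▷ y, z⟩_q = ⟨x ⊗ y, Δ'_q(z)⟩_q for all x, y, z ∈ h_PP. -/

import Mathlib

open scoped TensorProduct
open scoped Classical

noncomputable section

/-- A plane poset structure on a set `α`: two partial orders `≤_h` (`hle`) and `≤_r` (`rle`)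
such that two distinct elements are comparable for `≤_h` if and only if they are not
comparable for `≤_r`. -/
structure PlanePoset (α : Type) where
  hle : α → α → Prop
  rle : α → α → Prop
  hle_refl : ∀ x, hle x x
  hle_antisymm : ∀ x y, hle x y → hle y x → x = y
  hle_trans : ∀ x y z, hle x y → hle y z → hle x z
  rle_refl : ∀ x, rle x x
  rle_antisymm : ∀ x y, rle x y → rle y x → x = y
  rle_trans : ∀ x y z, rle x y → rle y z → rle x z
  compat : ∀ x y, x ≠ y → ((hle x y ∨ hle y x) ↔ ¬ (rle x y ∨ rle y x))

namespace PlanePoset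

variable {α β : Type}

/-- The induced (total) order `x ≤ y iff x ≤_h y or x ≤_r y`. -/
def tle (P : PlanePoset α) (x y : α) : Prop := P.hle x y ∨ P.rle x y

/-- Transport of a plane poset structure along a bijection. -/
def map (e : α ≃ β) (P : PlanePoset α) : PlanePoset β where
  hle x y := P.hle (e.symm x) (e.symm y)
  rle x y := P.rle (e.symm x) (e.symm y)
  hle_refl x := P.hle_refl _
  hle_antisymm x y h1 h2 := e.symm.injective (P.hle_antisymm _ _ h1 h2)
  hle_trans x y z h1 h2 := P.hle_trans _ _ _ h1 h2
  rle_refl x := P.rle_refl _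
  rle_antisymm x y h1 h2 := e.symm.injective (P.rle_antisymm _ _ h1 h2)
  rle_trans x y z h1 h2 := P.rle_trans _ _ _ h1 h2
  compat x y hxy := P.compat _ _ fun h => hxy (e.symm.injective h)

@[simp] theorem map_hle (e : α ≃ β) (P : PlanePoset α) (x y : β) :
    (P.map e).hle x y ↔ P.hle (e.symm x) (e.symm y) := Iff.rfl

@[simp] theorem map_rle (e : α ≃ β) (P : PlanePoset α) (x y : β) :
    (P.map e).rle x y ↔ P.rle (e.symm x) (e.symm y) := Iff.rfl

/-- The composition `PQ` of two plane posets: `x ≤_r y` for every `x ∈ P`, `y ∈ Q`. -/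
def comp (P : PlanePoset α) (Q : PlanePoset β) : PlanePoset (α ⊕ β) where
  hle x y :=
    match x, y with
    | Sum.inl a, Sum.inl b => P.hle a b
    | Sum.inr a, Sum.inr b => Q.hle a b
    | _, _ => False
  rle x y :=
    match x, y with
    | Sum.inl a, Sum.inl b => P.rle a b
    | Sum.inr a, Sum.inr b => Q.rle a b
    | Sum.inl _, Sum.inr _ => True
    | Sum.inr _, Sum.inl _ => False
  hle_refl := by
    rintro (a | a)
    · exact P.hle_refl a
    · exact Q.hle_refl a
  hle_antisymm := by
    rintro (a | a) (b | b) h1 h2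
    · exact congrArg Sum.inl (P.hle_antisymm a b h1 h2)
    · exact h1.elim
    · exact h1.elim
    · exact congrArg Sum.inr (Q.hle_antisymm a b h1 h2)
  hle_trans := by
    rintro (a | a) (b | b) (c | c) h1 h2 <;>
      first
        | exact P.hle_trans _ _ _ h1 h2
        | exact Q.hle_trans _ _ _ h1 h2
        | exact h1.elim
        | exact h2.elim
  rle_refl := by
    rintro (a | a)
    · exact P.rle_refl a
    · exact Q.rle_refl a
  rle_antisymm := by
    rintro (a | a) (b | b) h1 h2
    · exact congrArg Sum.inl (P.rle_antisymm a b h1 h2)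
    · exact h2.elim
    · exact h1.elim
    · exact congrArg Sum.inr (Q.rle_antisymm a b h1 h2)
  rle_trans := by
    rintro (a | a) (b | b) (c | c) h1 h2 <;>
      first
        | exact P.rle_trans _ _ _ h1 h2
        | exact Q.rle_trans _ _ _ h1 h2
        | exact h1.elim
        | exact h2.elim
        | trivial
  compat := by
    rintro (a | a) (b | b) hne
    · exact P.compat a b fun h => hne (congrArg Sum.inl h)
    · show (False ∨ False) ↔ ¬ (True ∨ False)
      simp
    · show (False ∨ False) ↔ ¬ (False ∨ True)
      simp
    · exact Q.compat a b fun h => hne (congrArg Sum.inr h)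

/-- The product `P ▷ Q` of two plane posets: `x ≤_h y` for every `x ∈ P`, `y ∈ Q`. -/
def hcomp (P : PlanePoset α) (Q : PlanePoset β) : PlanePoset (α ⊕ β) where
  hle x y :=
    match x, y with
    | Sum.inl a, Sum.inl b => P.hle a b
    | Sum.inr a, Sum.inr b => Q.hle a b
    | Sum.inl _, Sum.inr _ => True
    | Sum.inr _, Sum.inl _ => False
  rle x y :=
    match x, y with
    | Sum.inl a, Sum.inl b => P.rle a b
    | Sum.inr a, Sum.inr b => Q.rle a b
    | _, _ => False
  hle_refl := by
    rintro (a | a)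
    · exact P.hle_refl a
    · exact Q.hle_refl a
  hle_antisymm := by
    rintro (a | a) (b | b) h1 h2
    · exact congrArg Sum.inl (P.hle_antisymm a b h1 h2)
    · exact h2.elim
    · exact h1.elim
    · exact congrArg Sum.inr (Q.hle_antisymm a b h1 h2)
  hle_trans := by
    rintro (a | a) (b | b) (c | c) h1 h2 <;>
      first
        | exact P.hle_trans _ _ _ h1 h2
        | exact Q.hle_trans _ _ _ h1 h2
        | exact h1.elim
        | exact h2.elim
        | trivial
  rle_refl := by
    rintro (a | a)
    · exact P.rle_refl a
    · exact Q.rle_refl a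
  rle_antisymm := by
    rintro (a | a) (b | b) h1 h2
    · exact congrArg Sum.inl (P.rle_antisymm a b h1 h2)
    · exact h1.elim
    · exact h1.elim
    · exact congrArg Sum.inr (Q.rle_antisymm a b h1 h2)
  rle_trans := by
    rintro (a | a) (b | b) (c | c) h1 h2 <;>
      first
        | exact P.rle_trans _ _ _ h1 h2
        | exact Q.rle_trans _ _ _ h1 h2
        | exact h1.elim
        | exact h2.elim
  compat := by
    rintro (a | a) (b | b) hne
    · exact P.compat a b fun h => hne (congrArg Sum.inl h)
    · show (True ∨ False) ↔ ¬ (False ∨ False)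
      simp
    · show (False ∨ True) ↔ ¬ (False ∨ False)
      simp
    · exact Q.compat a b fun h => hne (congrArg Sum.inr h)

/-- Restriction of a plane poset to a subset (a plane subposet). -/
def res (P : PlanePoset α) (s : Finset α) : PlanePoset {x : α // x ∈ s} where
  hle x y := P.hle x.1 y.1
  rle x y := P.rle x.1 y.1
  hle_refl x := P.hle_refl _
  hle_antisymm x y h1 h2 := Subtype.ext (P.hle_antisymm _ _ h1 h2)
  hle_trans x y z h1 h2 := P.hle_trans _ _ _ h1 h2
  rle_refl x := P.rle_refl _
  rle_antisymm x y h1 h2 := Subtype.ext (P.rle_antisymm _ _ h1 h2)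
  rle_trans x y z h1 h2 := P.rle_trans _ _ _ h1 h2
  compat x y hxy := P.compat _ _ fun h => hxy (Subtype.ext h)

/-- The involution `ι` exchanging the two partial orders. -/
def swap (P : PlanePoset α) : PlanePoset α where
  hle := P.rle
  rle := P.hle
  hle_refl := P.rle_refl
  hle_antisymm := P.rle_antisymm
  hle_trans := P.rle_trans
  rle_refl := P.hle_refl
  rle_antisymm := P.hle_antisymm
  rle_trans := P.hle_trans
  compat x y hxy := by
    have h := P.compat x y hxy
    tauto

end PlanePoset

/-- A plane poset structure on `Fin n` is canonical when the induced total order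
is the usual order on `{1, …, n}`. -/
def IsCanon {n : ℕ} (P : PlanePoset (Fin n)) : Prop :=
  ∀ x y : Fin n, (P.hle x y ∨ P.rle x y) ↔ x ≤ y

/-- `PP(n)`: (isoclasses of) plane posets of cardinality `n`, realized as the canonical
plane poset structures on `{1, …, n}`. -/
def CanonPP (n : ℕ) : Type := { P : PlanePoset (Fin n) // IsCanon P }

namespace CanonPP

/-- The empty plane poset, unit of both products. -/
def one : CanonPP 0 :=
  ⟨{ hle := fun _ _ => True
     rle := fun _ _ => True
     hle_refl := fun _ => trivial
     hle_antisymm := fun x => x.elim0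
     hle_trans := fun _ _ _ _ _ => trivial
     rle_refl := fun _ => trivial
     rle_antisymm := fun x => x.elim0
     rle_trans := fun _ _ _ _ _ => trivial
     compat := fun x => x.elim0 }, fun x => x.elim0⟩

/-- The composition `PQ` of plane posets, realized canonically. -/
def comp {k l : ℕ} (P : CanonPP k) (Q : CanonPP l) : CanonPP (k + l) :=
  ⟨(P.1.comp Q.1).map finSumFinEquiv, by
    intro x y
    obtain ⟨a, rfl⟩ := finSumFinEquiv.surjective x
    obtain ⟨b, rfl⟩ := finSumFinEquiv.surjective y
    simp only [PlanePoset.map_hle, PlanePoset.map_rle, Equiv.symm_apply_apply]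
    rcases a with a | a <;> rcases b with b | b
    · show (P.1.hle a b ∨ P.1.rle a b) ↔ _
      rw [P.2 a b, finSumFinEquiv_apply_left, finSumFinEquiv_apply_left]
      simp only [Fin.le_def, Fin.coe_castAdd]
      try omega
    · show (False ∨ True) ↔ _
      rw [finSumFinEquiv_apply_left, finSumFinEquiv_apply_right]
      have ha := a.isLt
      simp only [false_or, true_iff, Fin.le_def, Fin.coe_castAdd, Fin.coe_natAdd]
      omega
    · show (False ∨ False) ↔ _
      rw [finSumFinEquiv_apply_right, finSumFinEquiv_apply_left]
      have hb := b.isLt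
      simp only [or_self, false_iff, Fin.le_def, Fin.coe_natAdd, Fin.coe_castAdd]
      omega
    · show (Q.1.hle a b ∨ Q.1.rle a b) ↔ _
      rw [Q.2 a b, finSumFinEquiv_apply_right, finSumFinEquiv_apply_right]
      simp only [Fin.le_def, Fin.coe_natAdd]
      omega⟩

/-- The product `P ▷ Q` of plane posets, realized canonically. -/
def hcomp {k l : ℕ} (P : CanonPP k) (Q : CanonPP l) : CanonPP (k + l) :=
  ⟨(P.1.hcomp Q.1).map finSumFinEquiv, by
    intro x y
    obtain ⟨a, rfl⟩ := finSumFinEquiv.surjective x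
    obtain ⟨b, rfl⟩ := finSumFinEquiv.surjective y
    simp only [PlanePoset.map_hle, PlanePoset.map_rle, Equiv.symm_apply_apply]
    rcases a with a | a <;> rcases b with b | b
    · show (P.1.hle a b ∨ P.1.rle a b) ↔ _
      rw [P.2 a b, finSumFinEquiv_apply_left, finSumFinEquiv_apply_left]
      simp only [Fin.le_def, Fin.coe_castAdd]
      try omega
    · show (True ∨ False) ↔ _
      rw [finSumFinEquiv_apply_left, finSumFinEquiv_apply_right]
      have ha := a.isLt
      simp only [or_false, true_iff, Fin.le_def, Fin.coe_castAdd, Fin.coe_natAdd]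
      omega
    · show (False ∨ False) ↔ _
      rw [finSumFinEquiv_apply_right, finSumFinEquiv_apply_left]
      have hb := b.isLt
      simp only [or_self, false_iff, Fin.le_def, Fin.coe_natAdd, Fin.coe_castAdd]
      omega
    · show (Q.1.hle a b ∨ Q.1.rle a b) ↔ _
      rw [Q.2 a b, finSumFinEquiv_apply_right, finSumFinEquiv_apply_right]
      simp only [Fin.le_def, Fin.coe_natAdd]
      omega⟩

/-- Restriction of a plane poset to a plane subposet, realized canonically via the unique
increasing bijection. -/
def restrict {n : ℕ} (P : CanonPP n) (s : Finset (Fin n)) : CanonPP s.card :=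
  ⟨(P.1.res s).map (s.orderIsoOfFin rfl).toEquiv.symm, by
    intro i j
    simp only [PlanePoset.map_hle, PlanePoset.map_rle, Equiv.symm_symm]
    show (P.1.hle ((s.orderIsoOfFin rfl).toEquiv i).1 ((s.orderIsoOfFin rfl).toEquiv j).1 ∨
          P.1.rle ((s.orderIsoOfFin rfl).toEquiv i).1 ((s.orderIsoOfFin rfl).toEquiv j).1) ↔ i ≤ j
    rw [P.2]
    rw [Subtype.coe_le_coe]
    exact (s.orderIsoOfFin rfl).le_iff_le⟩

/-- The involution `ι`, on canonical plane posets. -/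
def iota {n : ℕ} (P : CanonPP n) : CanonPP n :=
  ⟨P.1.swap, fun x y => by rw [or_comm]; exact P.2 x y⟩

end CanonPP

/-- The partial (weak Bruhat) order on `PP(n)`: `P ≤ Q` iff `x ≤_h y` in `Q` implies
`x ≤_h y` in `P` (the increasing bijection between canonical representatives being
the identity). -/
def PPle {n : ℕ} (P Q : CanonPP n) : Prop :=
  ∀ x y : Fin n, Q.1.hle x y → P.1.hle x y

/-- Strict version of the order on `PP(n)`. -/
def PPlt {n : ℕ} (P Q : CanonPP n) : Prop := PPle P Q ∧ P ≠ Q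

/-- Covering relation of the poset `(PP(n), ≤)`. -/
def PPcovBy {n : ℕ} (P Q : CanonPP n) : Prop :=
  PPlt P Q ∧ ∀ T : CanonPP n, PPlt P T → ¬ PPlt T Q

/-- `E(P) = {(i,j) | i <_h j}`. -/
def Eset {n : ℕ} (P : CanonPP n) : Set (Fin n × Fin n) :=
  {p | P.1.hle p.1 p.2 ∧ p.1 ≠ p.2}

/-- A biideal of a plane poset: an ideal for both partial orders, equivalently an ideal
for the induced total order. -/
def IsBiideal {n : ℕ} (P : CanonPP n) (I : Finset (Fin n)) : Prop :=
  ∀ x y : Fin n, x ∈ I → (P.1.hle x y ∨ P.1.rle x y) → y ∈ I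

/-- `h_s^t = #{(x,y) ∈ s × t | x <_h y}`. -/
def hNum {n : ℕ} (P : CanonPP n) (s t : Finset (Fin n)) : ℕ :=
  ((s ×ˢ t).filter (fun p : Fin n × Fin n => P.1.hle p.1 p.2 ∧ p.1 ≠ p.2)).card

/-- `φ(P,Q) = #{(x,y) | x <_r y in P and x <_h y in Q} + #{(x,y) | x <_h y in P and
x <_r y in Q}` (via the identity increasing bijection). -/
def phi {n : ℕ} (P Q : CanonPP n) : ℕ :=
  (Finset.univ.filter (fun p : Fin n × Fin n =>
      (P.1.rle p.1 p.2 ∧ p.1 ≠ p.2) ∧ (Q.1.hle p.1 p.2 ∧ p.1 ≠ p.2))).card +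
  (Finset.univ.filter (fun p : Fin n × Fin n =>
      (P.1.hle p.1 p.2 ∧ p.1 ≠ p.2) ∧ (Q.1.rle p.1 p.2 ∧ p.1 ≠ p.2))).card

/-- The level `ℓ(P) = #{(x,y) | x <_r y}`. -/
def level {n : ℕ} (P : CanonPP n) : ℕ :=
  (Finset.univ.filter (fun p : Fin n × Fin n => P.1.rle p.1 p.2 ∧ p.1 ≠ p.2)).card

/-- The plane poset `P_σ = Ψ_n(σ)` associated to a permutation `σ`. -/
def PsiPerm {n : ℕ} (σ : Equiv.Perm (Fin n)) : CanonPP n :=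
  ⟨{ hle := fun i j => i ≤ j ∧ σ.symm i ≤ σ.symm j
     rle := fun i j => i ≤ j ∧ σ.symm j ≤ σ.symm i
     hle_refl := fun x => ⟨le_refl x, le_refl _⟩
     hle_antisymm := fun x y h1 h2 => le_antisymm h1.1 h2.1
     hle_trans := fun x y z h1 h2 => ⟨le_trans h1.1 h2.1, le_trans h1.2 h2.2⟩
     rle_refl := fun x => ⟨le_refl x, le_refl _⟩
     rle_antisymm := fun x y h1 h2 => le_antisymm h1.1 h2.1
     rle_trans := fun x y z h1 h2 => ⟨le_trans h1.1 h2.1, le_trans h2.2 h1.2⟩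
     compat := by
       intro x y hxy
       have h1 : (x : ℕ) ≠ (y : ℕ) := fun h => hxy (Fin.ext h)
       have h2 : ((σ.symm x : Fin n) : ℕ) ≠ ((σ.symm y : Fin n) : ℕ) :=
         fun h => hxy (σ.symm.injective (Fin.ext h))
       simp only [Fin.le_def]
       omega },
   by
     intro x y
     show ((x ≤ y ∧ σ.symm x ≤ σ.symm y) ∨ (x ≤ y ∧ σ.symm y ≤ σ.symm x)) ↔ x ≤ y
     simp only [Fin.le_def]
     omega⟩

/-- One step of the weak Bruhat order: exchange two consecutive letters `i < j`
(`i` appearing immediately before `j`) in the word `σ(1) ⋯ σ(n)`. -/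
def bruhatStep {n : ℕ} (σ τ : Equiv.Perm (Fin n)) : Prop :=
  ∃ (i j k : Fin n) (hk : (k : ℕ) + 1 < n),
    i < j ∧ σ k = i ∧ σ ⟨(k : ℕ) + 1, hk⟩ = j ∧ τ = Equiv.swap i j * σ

/-- The set of (isoclasses of) plane posets. -/
abbrev PPS : Type := Σ n : ℕ, CanonPP n

/-- Composition product on plane posets. -/
def PPS.comp (P Q : PPS) : PPS := ⟨P.1 + Q.1, P.2.comp Q.2⟩

/-- The product `▷` on plane posets. -/
def PPS.hcomp (P Q : PPS) : PPS := ⟨P.1 + Q.1, P.2.hcomp Q.2⟩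

/-- Value of the coproduct `Δ_q` on a plane poset:
`Δ_q(P) = Σ_{I biideal of P} q^{h_{P∖I}^I} (P∖I) ⊗ I`. -/
def deltaOn (K : Type) [Field K] (q : K) {n : ℕ} (P : CanonPP n) :
    (PPS →₀ K) ⊗[K] (PPS →₀ K) :=
  ∑ I ∈ Finset.univ.filter (fun I : Finset (Fin n) => IsBiideal P I),
    q ^ hNum P Iᶜ I •
      (Finsupp.single (⟨Iᶜ.card, P.restrict Iᶜ⟩ : PPS) (1 : K) ⊗ₜ[K]
        Finsupp.single (⟨I.card, P.restrict I⟩ : PPS) (1 : K))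

/-- The coproduct `Δ_q` on `h_PP`, extended linearly. -/
def Delta (K : Type) [Field K] (q : K) :
    (PPS →₀ K) →ₗ[K] (PPS →₀ K) ⊗[K] (PPS →₀ K) :=
  Finsupp.lift _ K PPS fun P => deltaOn K q P.2

/-- The composition product `m`, extended bilinearly to `h_PP`. -/
def mulPP (K : Type) [Field K] : (PPS →₀ K) →ₗ[K] (PPS →₀ K) →ₗ[K] (PPS →₀ K) :=
  Finsupp.lift _ K PPS fun P =>
    Finsupp.lift _ K PPS fun Q => Finsupp.single (PPS.comp P Q) 1

/-- The componentwise product on `h_PP ⊗ h_PP`. -/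
def mulT (K : Type) [Field K] :
    ((PPS →₀ K) ⊗[K] (PPS →₀ K)) →ₗ[K] ((PPS →₀ K) ⊗[K] (PPS →₀ K)) →ₗ[K]
      ((PPS →₀ K) ⊗[K] (PPS →₀ K)) :=
  TensorProduct.map₂ (mulPP K) (mulPP K)

/-- Multiplication of the basis element of a plane poset by `q^{n·c}` where `n` is its
cardinality. -/
def scale (K : Type) [Field K] (q : K) (c : ℕ) : (PPS →₀ K) →ₗ[K] (PPS →₀ K) :=
  Finsupp.lift _ K PPS fun P => q ^ (P.1 * c) • Finsupp.single P 1

/-- Right multiplication by a plane poset for the product `▷`. -/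
def rmulH (K : Type) [Field K] (Q : PPS) : (PPS →₀ K) →ₗ[K] (PPS →₀ K) :=
  Finsupp.lift _ K PPS fun P => Finsupp.single (PPS.hcomp P Q) 1

/-- Left multiplication by a plane poset for the product `▷`. -/
def lmulH (K : Type) [Field K] (P : PPS) : (PPS →₀ K) →ₗ[K] (PPS →₀ K) :=
  Finsupp.lift _ K PPS fun Q => Finsupp.single (PPS.hcomp P Q) 1

/-- The pairing on plane posets of the same cardinality:
`⟨P,Q⟩_q = q^{φ(P,Q)}` if `ι(P) ≤ Q`, and `0` otherwise. -/
def pairN (K : Type) [Field K] (q : K) {n : ℕ} (P Q : CanonPP n) : K :=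
  if PPle (CanonPP.iota P) Q then q ^ phi P Q else 0

/-- The pairing `⟨-,-⟩_q` on plane posets (zero on posets of different cardinalities). -/
def pairPP (K : Type) [Field K] (q : K) (P Q : PPS) : K :=
  if h : P.1 = Q.1 then pairN K q (cast (congrArg CanonPP h) P.2) Q.2 else 0

/-- The pairing `⟨-,-⟩_q`, extended bilinearly to `h_PP`. -/
def Bform (K : Type) [Field K] (q : K) : (PPS →₀ K) →ₗ[K] (PPS →₀ K) →ₗ[K] K :=
  Finsupp.lift _ K PPS fun P => Finsupp.lift K K PPS fun Q => pairPP K q P Q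

end

section Aux17

open Finset

variable {k l : ℕ}

private theorem planePoset_ext {α : Type} {P Q : PlanePoset α}
    (h1 : P.hle = Q.hle) (h2 : P.rle = Q.rle) : P = Q := by
  cases P; cases Q
  simp only at h1 h2
  subst h1; subst h2
  rfl

private theorem pps_sigma_eq {n n' : ℕ} (h : n = n') (A : CanonPP n) (A' : CanonPP n')
    (hh : ∀ x y : Fin n, A.1.hle x y ↔ A'.1.hle (Fin.cast h x) (Fin.cast h y))
    (hr : ∀ x y : Fin n, A.1.rle x y ↔ A'.1.rle (Fin.cast h x) (Fin.cast h y)) :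
    (⟨n, A⟩ : PPS) = ⟨n', A'⟩ := by
  subst h
  have : A = A' := Subtype.ext (planePoset_ext
    (funext fun x => funext fun y => propext (by simpa using hh x y))
    (funext fun x => funext fun y => propext (by simpa using hr x y)))
  rw [this]

private def lowSet (k l : ℕ) : Finset (Fin (k + l)) :=
  Finset.univ.filter (fun x => (x : ℕ) < k)

private def topSet (k l : ℕ) : Finset (Fin (k + l)) :=
  Finset.univ.filter (fun x => k ≤ (x : ℕ))

private lemma compl_topSet : (topSet k l)ᶜ = lowSet k l := by
  ext x; simp [lowSet, topSet]

private lemma lowSet_card : (lowSet k l).card = k := by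
  have h : lowSet k l = Finset.map (Fin.castAddEmb l) Finset.univ := by
    ext x
    simp only [lowSet, mem_filter, mem_univ, true_and, mem_map]
    constructor
    · intro hx; exact ⟨⟨(x : ℕ), hx⟩, Fin.ext rfl⟩
    · rintro ⟨a, rfl⟩; simpa using a.isLt
  rw [h, card_map, card_univ, Fintype.card_fin]

private lemma compl_lowSet : (lowSet k l)ᶜ = topSet k l := by
  ext x; simp [lowSet, topSet]

private lemma topSet_card : (topSet k l).card = l := by
  rw [← compl_lowSet, Finset.card_compl, lowSet_card, Fintype.card_fin]
  omega

private lemma natAdd_eq_iff (a b : Fin l) : Fin.natAdd k a = Fin.natAdd k b ↔ a = b := by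
  simp [Fin.ext_iff]

private lemma castAdd_ne_natAdd (a : Fin k) (b : Fin l) :
    Fin.castAdd l a ≠ Fin.natAdd k b := by
  have := a.isLt
  simp only [ne_eq, Fin.ext_iff, Fin.coe_castAdd, Fin.coe_natAdd]
  omega

private lemma natAdd_ne_castAdd (a : Fin l) (b : Fin k) :
    Fin.natAdd k a ≠ Fin.castAdd l b := by
  have := b.isLt
  simp only [ne_eq, Fin.ext_iff, Fin.coe_castAdd, Fin.coe_natAdd]
  omega

private def lowRes (R : CanonPP (k + l)) : CanonPP k :=
  ⟨{ hle := fun a b => R.1.hle (Fin.castAdd l a) (Fin.castAdd l b)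
     rle := fun a b => R.1.rle (Fin.castAdd l a) (Fin.castAdd l b)
     hle_refl := fun _ => R.1.hle_refl _
     hle_antisymm := fun a b h1 h2 =>
       Fin.castAdd_injective k l (R.1.hle_antisymm _ _ h1 h2)
     hle_trans := fun _ _ _ h1 h2 => R.1.hle_trans _ _ _ h1 h2
     rle_refl := fun _ => R.1.rle_refl _
     rle_antisymm := fun a b h1 h2 =>
       Fin.castAdd_injective k l (R.1.rle_antisymm _ _ h1 h2)
     rle_trans := fun _ _ _ h1 h2 => R.1.rle_trans _ _ _ h1 h2
     compat := fun a b hab =>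
       R.1.compat _ _ (fun h => hab (Fin.castAdd_injective k l h)) },
   fun a b => by
     rw [R.2]
     simp only [Fin.le_def, Fin.coe_castAdd]⟩

private def highRes (R : CanonPP (k + l)) : CanonPP l :=
  ⟨{ hle := fun a b => R.1.hle (Fin.natAdd k a) (Fin.natAdd k b)
     rle := fun a b => R.1.rle (Fin.natAdd k a) (Fin.natAdd k b)
     hle_refl := fun _ => R.1.hle_refl _
     hle_antisymm := fun a b h1 h2 =>
       (natAdd_eq_iff a b).1 (R.1.hle_antisymm _ _ h1 h2)
     hle_trans := fun _ _ _ h1 h2 => R.1.hle_trans _ _ _ h1 h2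
     rle_refl := fun _ => R.1.rle_refl _
     rle_antisymm := fun a b h1 h2 =>
       (natAdd_eq_iff a b).1 (R.1.rle_antisymm _ _ h1 h2)
     rle_trans := fun _ _ _ h1 h2 => R.1.rle_trans _ _ _ h1 h2
     compat := fun a b hab =>
       R.1.compat _ _ (fun h => hab ((natAdd_eq_iff a b).1 h)) },
   fun a b => by
     rw [R.2]
     simp only [Fin.le_def, Fin.coe_natAdd]
     omega⟩

private lemma lowEmb_eq (i : Fin ((lowSet k l).card)) :
    ((lowSet k l).orderIsoOfFin rfl i : Fin (k + l)) =
      Fin.castAdd l (Fin.cast lowSet_card i) := by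
  rw [Finset.coe_orderIsoOfFin_apply]
  have h := Finset.orderEmbOfFin_unique (s := lowSet k l) (rfl : (lowSet k l).card = _)
    (f := fun i => Fin.castAdd l (Fin.cast lowSet_card i))
    (fun x => by
      simp only [lowSet, Finset.mem_filter, Finset.mem_univ, true_and, Fin.coe_castAdd]
      exact (Fin.cast lowSet_card x).isLt)
    (fun a b hab => by
      simp only [Fin.lt_def, Fin.coe_castAdd, Fin.coe_cast]
      exact hab)
  exact (congrFun h i).symm

private lemma topEmb_eq (i : Fin ((topSet k l).card)) :
    ((topSet k l).orderIsoOfFin rfl i : Fin (k + l)) =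
      Fin.natAdd k (Fin.cast topSet_card i) := by
  rw [Finset.coe_orderIsoOfFin_apply]
  have h := Finset.orderEmbOfFin_unique (s := topSet k l) (rfl : (topSet k l).card = _)
    (f := fun i => Fin.natAdd k (Fin.cast topSet_card i))
    (fun x => by
      simp only [topSet, Finset.mem_filter, Finset.mem_univ, true_and, Fin.coe_natAdd]
      omega)
    (fun a b hab => by
      simp only [Fin.lt_def, Fin.coe_natAdd, Fin.coe_cast]
      exact Nat.add_lt_add_left hab k)
  exact (congrFun h i).symm

private lemma restrict_lowSet (R : CanonPP (k + l)) :
    (⟨(lowSet k l).card, R.restrict (lowSet k l)⟩ : PPS) = ⟨k, lowRes R⟩ := by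
  refine pps_sigma_eq lowSet_card _ _ (fun x y => ?_) (fun x y => ?_)
  · show R.1.hle (((lowSet k l).orderIsoOfFin rfl x : Fin (k + l)))
      (((lowSet k l).orderIsoOfFin rfl y : Fin (k + l))) ↔ _
    rw [lowEmb_eq, lowEmb_eq]
    exact Iff.rfl
  · show R.1.rle (((lowSet k l).orderIsoOfFin rfl x : Fin (k + l)))
      (((lowSet k l).orderIsoOfFin rfl y : Fin (k + l))) ↔ _
    rw [lowEmb_eq, lowEmb_eq]
    exact Iff.rfl

private lemma restrict_topSet (R : CanonPP (k + l)) :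
    (⟨(topSet k l).card, R.restrict (topSet k l)⟩ : PPS) = ⟨l, highRes R⟩ := by
  refine pps_sigma_eq topSet_card _ _ (fun x y => ?_) (fun x y => ?_)
  · show R.1.hle (((topSet k l).orderIsoOfFin rfl x : Fin (k + l)))
      (((topSet k l).orderIsoOfFin rfl y : Fin (k + l))) ↔ _
    rw [topEmb_eq, topEmb_eq]
    exact Iff.rfl
  · show R.1.rle (((topSet k l).orderIsoOfFin rfl x : Fin (k + l)))
      (((topSet k l).orderIsoOfFin rfl y : Fin (k + l))) ↔ _
    rw [topEmb_eq, topEmb_eq]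
    exact Iff.rfl

section Hlemmas

variable (P : CanonPP k) (Q : CanonPP l)

private lemma H_rle_ll (a b : Fin k) :
    (P.hcomp Q).1.rle (Fin.castAdd l a) (Fin.castAdd l b) ↔ P.1.rle a b := by
  show (P.1.hcomp Q.1).rle (finSumFinEquiv.symm (Fin.castAdd l a))
    (finSumFinEquiv.symm (Fin.castAdd l b)) ↔ _
  rw [finSumFinEquiv_symm_apply_castAdd, finSumFinEquiv_symm_apply_castAdd]
  exact Iff.rfl

private lemma H_rle_hh (a b : Fin l) :
    (P.hcomp Q).1.rle (Fin.natAdd k a) (Fin.natAdd k b) ↔ Q.1.rle a b := by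
  show (P.1.hcomp Q.1).rle (finSumFinEquiv.symm (Fin.natAdd k a))
    (finSumFinEquiv.symm (Fin.natAdd k b)) ↔ _
  rw [finSumFinEquiv_symm_apply_natAdd, finSumFinEquiv_symm_apply_natAdd]
  exact Iff.rfl

private lemma H_rle_lh (a : Fin k) (b : Fin l) :
    (P.hcomp Q).1.rle (Fin.castAdd l a) (Fin.natAdd k b) ↔ False := by
  show (P.1.hcomp Q.1).rle (finSumFinEquiv.symm (Fin.castAdd l a))
    (finSumFinEquiv.symm (Fin.natAdd k b)) ↔ _
  rw [finSumFinEquiv_symm_apply_castAdd, finSumFinEquiv_symm_apply_natAdd]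
  exact Iff.rfl

private lemma H_rle_hl (a : Fin l) (b : Fin k) :
    (P.hcomp Q).1.rle (Fin.natAdd k a) (Fin.castAdd l b) ↔ False := by
  show (P.1.hcomp Q.1).rle (finSumFinEquiv.symm (Fin.natAdd k a))
    (finSumFinEquiv.symm (Fin.castAdd l b)) ↔ _
  rw [finSumFinEquiv_symm_apply_natAdd, finSumFinEquiv_symm_apply_castAdd]
  exact Iff.rfl

private lemma H_hle_ll (a b : Fin k) :
    (P.hcomp Q).1.hle (Fin.castAdd l a) (Fin.castAdd l b) ↔ P.1.hle a b := by
  show (P.1.hcomp Q.1).hle (finSumFinEquiv.symm (Fin.castAdd l a))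
    (finSumFinEquiv.symm (Fin.castAdd l b)) ↔ _
  rw [finSumFinEquiv_symm_apply_castAdd, finSumFinEquiv_symm_apply_castAdd]
  exact Iff.rfl

private lemma H_hle_hh (a b : Fin l) :
    (P.hcomp Q).1.hle (Fin.natAdd k a) (Fin.natAdd k b) ↔ Q.1.hle a b := by
  show (P.1.hcomp Q.1).hle (finSumFinEquiv.symm (Fin.natAdd k a))
    (finSumFinEquiv.symm (Fin.natAdd k b)) ↔ _
  rw [finSumFinEquiv_symm_apply_natAdd, finSumFinEquiv_symm_apply_natAdd]
  exact Iff.rfl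

private lemma H_hle_lh (a : Fin k) (b : Fin l) :
    (P.hcomp Q).1.hle (Fin.castAdd l a) (Fin.natAdd k b) ↔ True := by
  show (P.1.hcomp Q.1).hle (finSumFinEquiv.symm (Fin.castAdd l a))
    (finSumFinEquiv.symm (Fin.natAdd k b)) ↔ _
  rw [finSumFinEquiv_symm_apply_castAdd, finSumFinEquiv_symm_apply_natAdd]
  exact Iff.rfl

private lemma H_hle_hl (a : Fin l) (b : Fin k) :
    (P.hcomp Q).1.hle (Fin.natAdd k a) (Fin.castAdd l b) ↔ False := by
  show (P.1.hcomp Q.1).hle (finSumFinEquiv.symm (Fin.natAdd k a))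
    (finSumFinEquiv.symm (Fin.castAdd l b)) ↔ _
  rw [finSumFinEquiv_symm_apply_natAdd, finSumFinEquiv_symm_apply_castAdd]
  exact Iff.rfl

end Hlemmas

private lemma R_hle_low (R : CanonPP (k + l)) (a b : Fin k) :
    R.1.hle (Fin.castAdd l a) (Fin.castAdd l b) ↔ (lowRes R).1.hle a b := Iff.rfl

private lemma R_rle_low (R : CanonPP (k + l)) (a b : Fin k) :
    R.1.rle (Fin.castAdd l a) (Fin.castAdd l b) ↔ (lowRes R).1.rle a b := Iff.rfl

private lemma R_hle_high (R : CanonPP (k + l)) (a b : Fin l) :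
    R.1.hle (Fin.natAdd k a) (Fin.natAdd k b) ↔ (highRes R).1.hle a b := Iff.rfl

private lemma R_rle_high (R : CanonPP (k + l)) (a b : Fin l) :
    R.1.rle (Fin.natAdd k a) (Fin.natAdd k b) ↔ (highRes R).1.rle a b := Iff.rfl

private lemma fin_add_cases (x : Fin (k + l)) :
    (∃ a : Fin k, x = Fin.castAdd l a) ∨ (∃ b : Fin l, x = Fin.natAdd k b) := by
  rcases Nat.lt_or_ge (x : ℕ) k with h | h
  · exact Or.inl ⟨⟨(x : ℕ), h⟩, Fin.ext rfl⟩
  · refine Or.inr ⟨⟨(x : ℕ) - k, by have := x.isLt; omega⟩, Fin.ext ?_⟩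
    simp only [Fin.coe_natAdd]
    omega

private def Valid {n : ℕ} (R : CanonPP n) (I : Finset (Fin n)) : Prop :=
  ∀ x ∉ I, ∀ y ∈ I, x ≠ y → R.1.rle x y

private lemma valid_lt {n : ℕ} {R : CanonPP n} {I : Finset (Fin n)} (hv : Valid R I)
    {x y : Fin n} (hx : x ∉ I) (hy : y ∈ I) : (x : ℕ) < (y : ℕ) := by
  have hne : x ≠ y := fun h => hx (h ▸ hy)
  have h1 := hv x hx y hy hne
  have h2 : x ≤ y := (R.2 x y).1 (Or.inr h1)
  rw [Fin.le_def] at h2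
  have h3 : (x : ℕ) ≠ (y : ℕ) := fun h => hne (Fin.ext h)
  omega

private lemma valid_eq_topSet {R : CanonPP (k + l)} {I : Finset (Fin (k + l))}
    (hv : Valid R I) (hc : I.card = l) : I = topSet k l := by
  have hcc : Iᶜ.card = k := by
    rw [Finset.card_compl, hc, Fintype.card_fin]; omega
  ext x
  simp only [topSet, mem_filter, mem_univ, true_and]
  constructor
  · intro hx
    by_contra hlt
    push_neg at hlt
    have hsub : Iᶜ ⊆ Finset.Iio x := by
      intro z hz
      rw [Finset.mem_Iio, Fin.lt_def]
      exact valid_lt hv (Finset.mem_compl.1 hz) hx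
    have hcard := Finset.card_le_card hsub
    rw [Fin.card_Iio, hcc] at hcard
    omega
  · intro hx
    by_contra hxI
    have hsub : I ⊆ Finset.Ioi x := by
      intro z hz
      rw [Finset.mem_Ioi, Fin.lt_def]
      exact valid_lt hv hxI hz
    have hcard := Finset.card_le_card hsub
    rw [Fin.card_Ioi, hc] at hcard
    have := x.isLt
    omega

private lemma castAdd_not_mem_topSet (a : Fin k) : Fin.castAdd l a ∉ topSet k l := by
  simp only [topSet, mem_filter, mem_univ, true_and, not_le, Fin.coe_castAdd]
  exact a.isLt

private lemma natAdd_mem_topSet (a : Fin l) : Fin.natAdd k a ∈ topSet k l := by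
  simp only [topSet, mem_filter, mem_univ, true_and, Fin.coe_natAdd]
  omega

private lemma key_iff (P : CanonPP k) (Q : CanonPP l) (R : CanonPP (k + l)) :
    PPle (CanonPP.iota (P.hcomp Q)) R ↔
      (Valid R (topSet k l) ∧ PPle (CanonPP.iota P) (lowRes R) ∧
        PPle (CanonPP.iota Q) (highRes R)) := by
  constructor
  · intro h
    refine ⟨?_, ?_, ?_⟩
    · intro x hx y hy hne
      rcases fin_add_cases x with ⟨a, rfl⟩ | ⟨a, rfl⟩
      · rcases fin_add_cases y with ⟨b, rfl⟩ | ⟨b, rfl⟩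
        · exact absurd hy (castAdd_not_mem_topSet b)
        · -- x low, y high
          have hle : Fin.castAdd l a ≤ Fin.natAdd k b := by
            rw [Fin.le_def]
            simp only [Fin.coe_castAdd, Fin.coe_natAdd]
            have := a.isLt
            omega
          rcases (R.2 _ _).2 hle with hh | hr
          · exact absurd ((H_rle_lh P Q a b).1 (h _ _ hh)) not_false
          · exact hr
      · exact absurd (natAdd_mem_topSet a) hx
    · intro a b hab
      exact (H_rle_ll P Q a b).1 (h _ _ hab)
    · intro a b hab
      exact (H_rle_hh P Q a b).1 (h _ _ hab)
  · rintro ⟨hv, h1, h2⟩ x y hxy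
    rcases fin_add_cases x with ⟨a, rfl⟩ | ⟨a, rfl⟩ <;>
      rcases fin_add_cases y with ⟨b, rfl⟩ | ⟨b, rfl⟩
    · exact (H_rle_ll P Q a b).2 (h1 a b hxy)
    · exfalso
      have hne := castAdd_ne_natAdd a b
      have hr := hv _ (castAdd_not_mem_topSet a) _ (natAdd_mem_topSet b) hne
      exact (R.1.compat _ _ hne).1 (Or.inl hxy) (Or.inl hr)
    · exfalso
      have hne := natAdd_ne_castAdd a b
      have hr := hv _ (castAdd_not_mem_topSet b) _ (natAdd_mem_topSet a) (castAdd_ne_natAdd b a)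
      exact (R.1.compat _ _ hne).1 (Or.inl hxy) (Or.inr hr)
    · exact (H_rle_hh P Q a b).2 (h2 a b hxy)

private lemma pairPP_same (K : Type) [Field K] (q : K) {n : ℕ} (A B : CanonPP n) :
    pairPP K q (⟨n, A⟩ : PPS) (⟨n, B⟩ : PPS) = pairN K q A B := by
  simp [pairPP]

private lemma card_filter_expand (D : Fin (k + l) × Fin (k + l) → Prop) :
    (Finset.univ.filter D).card
      = ((∑ a : Fin k, ∑ b : Fin k, if D (Fin.castAdd l a, Fin.castAdd l b) then 1 else 0)
        + (∑ a : Fin k, ∑ b : Fin l, if D (Fin.castAdd l a, Fin.natAdd k b) then 1 else 0))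
        + ((∑ a : Fin l, ∑ b : Fin k, if D (Fin.natAdd k a, Fin.castAdd l b) then 1 else 0)
        + (∑ a : Fin l, ∑ b : Fin l, if D (Fin.natAdd k a, Fin.natAdd k b) then 1 else 0)) := by
  classical
  rw [Finset.card_filter]
  rw [← Equiv.sum_comp (Equiv.prodCongr finSumFinEquiv finSumFinEquiv)
    (fun p : Fin (k + l) × Fin (k + l) => if D p then 1 else 0)]
  rw [Fintype.sum_prod_type, Fintype.sum_sum_type]
  congr 1 <;> rw [← Finset.sum_add_distrib] <;>
    refine Finset.sum_congr rfl (fun a _ => ?_) <;>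
    rw [Fintype.sum_sum_type] <;>
    simp [Equiv.prodCongr_apply]

private lemma card_filter_expand' {n : ℕ} (D : Fin n × Fin n → Prop) :
    (Finset.univ.filter D).card
      = ∑ a : Fin n, ∑ b : Fin n, if D (a, b) then 1 else 0 := by
  classical
  rw [Finset.card_filter, Fintype.sum_prod_type]

private lemma lowRes_hcomp_rle (P : CanonPP k) (Q : CanonPP l) (a b : Fin k) :
    (lowRes (P.hcomp Q)).1.rle a b ↔ P.1.rle a b := H_rle_ll P Q a b

private lemma lowRes_hcomp_hle (P : CanonPP k) (Q : CanonPP l) (a b : Fin k) :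
    (lowRes (P.hcomp Q)).1.hle a b ↔ P.1.hle a b := H_hle_ll P Q a b

private lemma highRes_hcomp_rle (P : CanonPP k) (Q : CanonPP l) (a b : Fin l) :
    (highRes (P.hcomp Q)).1.rle a b ↔ Q.1.rle a b := H_rle_hh P Q a b

private lemma highRes_hcomp_hle (P : CanonPP k) (Q : CanonPP l) (a b : Fin l) :
    (highRes (P.hcomp Q)).1.hle a b ↔ Q.1.hle a b := H_hle_hh P Q a b

private lemma phi_eq (P : CanonPP k) (Q : CanonPP l) (R : CanonPP (k + l))
    (hv : Valid R (topSet k l)) :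
    phi (P.hcomp Q) R = k * l + (phi P (lowRes R) + phi Q (highRes R)) := by
  classical
  have hvr : ∀ (a : Fin k) (b : Fin l), R.1.rle (Fin.castAdd l a) (Fin.natAdd k b) :=
    fun a b => hv _ (castAdd_not_mem_topSet a) _ (natAdd_mem_topSet b) (castAdd_ne_natAdd a b)
  unfold phi
  simp only [Finset.card_filter]
  rw [← Equiv.sum_comp (Equiv.prodCongr finSumFinEquiv finSumFinEquiv)]
  rw [← Equiv.sum_comp (Equiv.prodCongr finSumFinEquiv finSumFinEquiv)]
  simp only [Fintype.sum_prod_type, Fintype.sum_sum_type, Equiv.prodCongr_apply,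
    Prod.map_apply, finSumFinEquiv_apply_left, finSumFinEquiv_apply_right]
  simp only [H_rle_lh, H_rle_hl, H_hle_lh, H_hle_hl, R_hle_low, R_rle_low, R_hle_high,
    R_rle_high, Fin.castAdd_inj, natAdd_eq_iff, ne_eq, castAdd_ne_natAdd, natAdd_ne_castAdd,
    not_false_iff, hvr, false_and, and_false, and_true, true_and, if_false, if_true,
    Finset.sum_const_zero, add_zero, zero_add]
  simp only [lowRes_hcomp_rle, lowRes_hcomp_hle, highRes_hcomp_rle, highRes_hcomp_hle,
    Finset.sum_add_distrib, Finset.sum_const, Finset.card_univ, Fintype.card_fin,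
    smul_eq_mul, mul_one]
  ring

end Aux17

/-- For all plane posets `P, Q, R`:
`⟨P ▷ Q, R⟩_q = Σ_{R = R₁R₂} q^{|R₁||R₂|} ⟨P, R₁⟩_q ⟨Q, R₂⟩_q`, the sum running over the
decompositions of `R` as a composition `R₁R₂` of plane subposets (`R₂` being indexed by the
subset `I` it occupies, with `x ≤_r y` for every `x ∈ R∖I`, `y ∈ I`); that is,
`⟨x ▷ y, z⟩_q = ⟨x ⊗ y, Δ'_q(z)⟩_q`. -/
theorem statement17 (K : Type) [Field K] (q : K) {k l m : ℕ}
    (P : CanonPP k) (Q : CanonPP l) (R : CanonPP m) :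
    pairPP K q (⟨k + l, P.hcomp Q⟩ : PPS) (⟨m, R⟩ : PPS) =
      ∑ I ∈ Finset.univ.filter
          (fun I : Finset (Fin m) => ∀ x ∉ I, ∀ y ∈ I, x ≠ y → R.1.rle x y),
        q ^ (Iᶜ.card * I.card) *
          (pairPP K q (⟨k, P⟩ : PPS) (⟨Iᶜ.card, R.restrict Iᶜ⟩ : PPS) *
            pairPP K q (⟨l, Q⟩ : PPS) (⟨I.card, R.restrict I⟩ : PPS)) := by
  classical
  have qpair0 : ∀ {a : ℕ} (A : CanonPP a) {n : ℕ} (B : CanonPP n), a ≠ n →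
      pairPP K q (⟨a, A⟩ : PPS) (⟨n, B⟩ : PPS) = 0 := by
    intro a A n B h
    exact dif_neg h
  by_cases hm : m = k + l
  · subst hm
    by_cases hv : Valid R (topSet k l)
    · have hmem : topSet k l ∈ Finset.univ.filter
          (fun I : Finset (Fin (k + l)) => ∀ x ∉ I, ∀ y ∈ I, x ≠ y → R.1.rle x y) := by
        simp only [Finset.mem_filter, Finset.mem_univ, true_and]
        exact hv
      rw [Finset.sum_eq_single_of_mem _ hmem (fun I hI hne => by
        simp only [Finset.mem_filter, Finset.mem_univ, true_and] at hI
        rcases eq_or_ne I.card l with hc | hc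
        · exact absurd (valid_eq_topSet hI hc) hne
        · rw [qpair0 Q (R.restrict I) (fun h => hc h.symm), mul_zero, mul_zero])]
      rw [compl_topSet, restrict_lowSet, restrict_topSet, lowSet_card, topSet_card,
        pairPP_same, pairPP_same, pairPP_same]
      by_cases hp : PPle (CanonPP.iota (P.hcomp Q)) R
      · obtain ⟨-, h1, h2⟩ := (key_iff P Q R).1 hp
        rw [pairN, if_pos hp, pairN, if_pos h1, pairN, if_pos h2,
          phi_eq P Q R hv, pow_add, pow_add]
      · have hno : ¬ (PPle (CanonPP.iota P) (lowRes R) ∧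
            PPle (CanonPP.iota Q) (highRes R)) :=
          fun ⟨h1, h2⟩ => hp ((key_iff P Q R).2 ⟨hv, h1, h2⟩)
        rw [pairN, if_neg hp]
        by_cases h1 : PPle (CanonPP.iota P) (lowRes R)
        · rw [pairN, pairN, if_pos h1, if_neg (fun h2 => hno ⟨h1, h2⟩), mul_zero, mul_zero]
        · rw [pairN, if_neg h1, zero_mul, mul_zero]
    · rw [pairPP_same, pairN, if_neg (fun hp => hv ((key_iff P Q R).1 hp).1)]
      refine (Finset.sum_eq_zero ?_).symm
      intro I hI
      simp only [Finset.mem_filter, Finset.mem_univ, true_and] at hI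
      rcases eq_or_ne I.card l with hc | hc
      · exact absurd (valid_eq_topSet hI hc ▸ hI) hv
      · rw [qpair0 Q (R.restrict I) (fun h => hc h.symm), mul_zero, mul_zero]
  · rw [show pairPP K q (⟨k + l, P.hcomp Q⟩ : PPS) (⟨m, R⟩ : PPS) = 0 from
      dif_neg (fun h => hm h.symm)]
    refine (Finset.sum_eq_zero ?_).symm
    intro I _
    rcases eq_or_ne I.card l with hc | hc
    · have hcc : Iᶜ.card ≠ k := by
        have hle := Finset.card_le_univ I
        rw [Fintype.card_fin] at hle
        rw [Finset.card_compl, Fintype.card_fin, hc]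
        omega
      rw [qpair0 P (R.restrict Iᶜ) (fun h => hcc h.symm), zero_mul, mul_zero]
    · rw [qpair0 Q (R.restrict I) (fun h => hc h.symm), mul_zero, mul_zero]
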